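/- Fix real parameters μ₁, μ₂, μ₃, μ₄ and let F_{ij} : ℝ⁴ → ℝ be the antisymmetric components F₁₂ = μ₁, F₁₃ = μ₁x₁ + μ₃, F₂₃ = μ₁x₂ + μ₄, F₃₄ = μ₂, F₁₄ = F₂₄ = 0 (F_{ji} = −F_{ij}, F_{ii} = 0). Let ξ₁(x) = (cos x₃, −sin x₃, 0, 0), ξ₂(x) = (sin x₃, cos x₃, 0, 0), ξ₃(x) = (0,0,1,0), ξ₄(x) = (0,0,0,1) be vector fields on ℝ⁴. Then the 2-form F is invariant along each ξₐ: for every a ∈ {1,2,3,4}, all i, j ∈ {1,2,3,4} and all x ∈ ℝ⁴, the Lie derivative components vanish: Σₖ [ ξₐᵏ(x) ∂ₖF_{ij}(x) + F_{kj}(x) ∂ᵢξₐᵏ(x) + F_{ik}(x) ∂ⱼξₐᵏ(x) ] = 0. -/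

import Mathlib

noncomputable section

/-- The partial derivative `∂ᵢ f (x)` of a function on `ℝ⁴` (Fréchet derivative in
the `i`-th coordinate direction). -/
def pd (i : Fin 4) (f : (Fin 4 → ℝ) → ℝ) (x : Fin 4 → ℝ) : ℝ :=
  fderiv ℝ f x (Pi.single i 1)

/-- The antisymmetric component matrix `F_{ij}` of the right-invariant
electromagnetic field 2-form on `E(2) × ℝ`: `F₁₂ = μ₁`, `F₁₃ = μ₁x₁ + μ₃`,
`F₂₃ = μ₁x₂ + μ₄`, `F₃₄ = μ₂`, `F₁₄ = F₂₄ = 0` (indices from `0`). -/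
def Fm (μ₁ μ₂ μ₃ μ₄ : ℝ) (x : Fin 4 → ℝ) : Matrix (Fin 4) (Fin 4) ℝ :=
  !![0, μ₁, μ₁ * x 0 + μ₃, 0;
     -μ₁, 0, μ₁ * x 1 + μ₄, 0;
     -(μ₁ * x 0 + μ₃), -(μ₁ * x 1 + μ₄), 0, μ₂;
     0, 0, -μ₂, 0]

/-- The Killing (left-invariant) vector fields `ξ₁, ξ₂, ξ₃, ξ₄` of `E(2) × ℝ`
on `ℝ⁴` (indexed from `0`). -/
def ξ : Fin 4 → ((Fin 4 → ℝ) → (Fin 4 → ℝ)) :=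
  ![fun x => ![Real.cos (x 2), -Real.sin (x 2), 0, 0],
    fun x => ![Real.sin (x 2), Real.cos (x 2), 0, 0],
    fun _ => ![0, 0, 1, 0],
    fun _ => ![0, 0, 0, 1]]

lemma hproj (j : Fin 4) (x : Fin 4 → ℝ) :
    HasFDerivAt (fun y : Fin 4 → ℝ => y j) (ContinuousLinearMap.proj (R := ℝ) (φ := fun _ : Fin 4 => ℝ) j) x :=
  (ContinuousLinearMap.proj (R := ℝ) (φ := fun _ : Fin 4 => ℝ) j).hasFDerivAt

@[simp] lemma pd_const (i : Fin 4) (c : ℝ) (x : Fin 4 → ℝ) :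
    pd i (fun _ => c) x = 0 := by
  simp [pd, fderiv_const]

@[simp] lemma pd_linear (c d : ℝ) (j i : Fin 4) (x : Fin 4 → ℝ) :
    pd i (fun y => c * y j + d) x = c * ((Pi.single i 1 : Fin 4 → ℝ) j) := by
  have h : HasFDerivAt (fun y : Fin 4 → ℝ => c * y j + d)
      (c • (ContinuousLinearMap.proj j : (Fin 4 → ℝ) →L[ℝ] ℝ)) x :=
    (((hproj j x).const_mul c).add_const d)
  simp only [pd]
  rw [h.fderiv]
  simp

@[simp] lemma pd_linear' (c d : ℝ) (j i : Fin 4) (x : Fin 4 → ℝ) :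
    pd i (fun y => -(c * y j + d)) x = -(c * ((Pi.single i 1 : Fin 4 → ℝ) j)) := by
  have h : HasFDerivAt (fun y : Fin 4 → ℝ => -(c * y j + d))
      (-(c • (ContinuousLinearMap.proj j : (Fin 4 → ℝ) →L[ℝ] ℝ))) x :=
    (((hproj j x).const_mul c).add_const d).neg
  simp only [pd]
  rw [h.fderiv]
  simp

@[simp] lemma pd_cos (i : Fin 4) (x : Fin 4 → ℝ) :
    pd i (fun y => Real.cos (y 2)) x = -Real.sin (x 2) * ((Pi.single i 1 : Fin 4 → ℝ) 2) := by
  have h := (hproj 2 x).cos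
  simp only [pd]
  rw [h.fderiv]
  simp

@[simp] lemma pd_sin (i : Fin 4) (x : Fin 4 → ℝ) :
    pd i (fun y => Real.sin (y 2)) x = Real.cos (x 2) * ((Pi.single i 1 : Fin 4 → ℝ) 2) := by
  have h := (hproj 2 x).sin
  simp only [pd]
  rw [h.fderiv]
  simp

@[simp] lemma pd_negsin (i : Fin 4) (x : Fin 4 → ℝ) :
    pd i (fun y => -Real.sin (y 2)) x = -(Real.cos (x 2) * ((Pi.single i 1 : Fin 4 → ℝ) 2)) := by
  have h := (hproj 2 x).sin.neg
  simp only [pd]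
  rw [HasFDerivAt.fderiv (f := fun y : Fin 4 → ℝ => -Real.sin (y 2)) h]
  simp

@[simp] lemma pd_linear'' (c d : ℝ) (j i : Fin 4) (x : Fin 4 → ℝ) :
    pd i (fun y => -d + -(c * y j)) x = -(c * ((Pi.single i 1 : Fin 4 → ℝ) j)) := by
  have h : HasFDerivAt (fun y : Fin 4 → ℝ => -d + -(c * y j))
      (-(c • (ContinuousLinearMap.proj (R := ℝ) (φ := fun _ : Fin 4 => ℝ) j))) x :=
    ((hproj j x).const_mul c).neg.const_add (-d)
  simp only [pd]
  rw [h.fderiv]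
  simp

@[simp] lemma pd_linear''' (c d : ℝ) (j i : Fin 4) (x : Fin 4 → ℝ) :
    pd i (fun y => -d - c * y j) x = -(c * ((Pi.single i 1 : Fin 4 → ℝ) j)) := by
  have h : HasFDerivAt (fun y : Fin 4 → ℝ => -d - c * y j)
      (-(c • (ContinuousLinearMap.proj (R := ℝ) (φ := fun _ : Fin 4 => ℝ) j))) x := by
    rw [show (fun y : Fin 4 → ℝ => -d - c * y j) = fun y => -d + -(c * y j) from
      funext fun y => sub_eq_add_neg _ _]
    exact ((hproj j x).const_mul c).neg.const_add (-d)
  simp only [pd]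
  rw [h.fderiv]
  simp

set_option maxHeartbeats 3200000 in
/-- the 2-form `F` is invariant along each Killing field `ξₐ`: all
components of the Lie derivative `(L_{ξₐ}F)_{ij} = ξₐᵏ∂ₖF_{ij} + F_{kj}∂ᵢξₐᵏ + F_{ik}∂ⱼξₐᵏ`
vanish. -/
theorem field_two_form_invariant (μ₁ μ₂ μ₃ μ₄ : ℝ) :
    ∀ (a i j : Fin 4) (x : Fin 4 → ℝ),
      (∑ k : Fin 4,
        (ξ a x k * pd k (fun y => Fm μ₁ μ₂ μ₃ μ₄ y i j) x
          + Fm μ₁ μ₂ μ₃ μ₄ x k j * pd i (fun y => ξ a y k) x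
          + Fm μ₁ μ₂ μ₃ μ₄ x i k * pd j (fun y => ξ a y k) x)) = 0 := by
  intro a i j x
  fin_cases a <;> fin_cases i <;> fin_cases j <;>
    simp [Fm, ξ, Fin.sum_univ_four, Pi.single_apply] <;> ring
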